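/- Let X = P_1+⋯+P_s be a set of distinct points in P^n (char K = 0) and let ν ≥ 1. Then for all sufficiently large degrees i, the degree-i components of ∂(I_X^{ν+1}), of ∂I_{(ν+1)X}, of I_{νX}, and of I_X^ν all coincide. -/

import Mathlib

open MvPolynomial

/-- The homogeneous vanishing ideal of the `K`-rational point of `ℙ^n` with homogeneous
coordinates `v`. -/
noncomputable def pointIdeal {K : Type*} [Field K] {n : ℕ} (v : Fin (n + 1) → K) :
    Ideal (MvPolynomial (Fin (n + 1)) K) :=
  Ideal.span {F | (∃ d, F.IsHomogeneous d) ∧ MvPolynomial.eval v F = 0}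

/-- The ideal `∂I` generated by all partial derivatives of elements of `I`. -/
noncomputable def partialsIdeal {K : Type*} [Field K] {n : ℕ}
    (I : Ideal (MvPolynomial (Fin (n + 1)) K)) : Ideal (MvPolynomial (Fin (n + 1)) K) :=
  Ideal.span {g | ∃ F ∈ I, ∃ j : Fin (n + 1), g = pderiv j F}

section Helpers

variable {R : Type*} [CommRing R]

lemma prod_sub_prod_mem {ι : Type*} {J : Ideal R} (s : Finset ι) (f g : ι → R)
    (h : ∀ i ∈ s, f i - g i ∈ J) : (∏ i ∈ s, f i) - ∏ i ∈ s, g i ∈ J := by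
  classical
  induction s using Finset.induction_on with
  | empty => simpa using J.zero_mem
  | @insert a s' ha ihs =>
    rw [Finset.prod_insert ha, Finset.prod_insert ha]
    have key : f a * ∏ i ∈ s', f i - g a * ∏ i ∈ s', g i
        = f a * ((∏ i ∈ s', f i) - ∏ i ∈ s', g i) + (f a - g a) * ∏ i ∈ s', g i := by ring
    rw [key]
    exact J.add_mem (J.mul_mem_left _ (ihs fun i hi' => h i (Finset.mem_insert_of_mem hi')))
      (J.mul_mem_right _ (h a (Finset.mem_insert_self a s')))

lemma ideal_sum_le {ι : Type*} (s : Finset ι) (f : ι → Ideal R) {C : Ideal R}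
    (h : ∀ i ∈ s, f i ≤ C) : ∑ i ∈ s, f i ≤ C := by
  classical
  induction s using Finset.induction_on with
  | empty => simp
  | @insert a s' ha ihs =>
    rw [Finset.sum_insert ha]
    exact sup_le (h a (Finset.mem_insert_self _ _))
      (ihs fun i hi' => h i (Finset.mem_insert_of_mem hi'))

lemma ideal_le_sum {ι : Type*} (s : Finset ι) (f : ι → Ideal R) {a : ι} (ha : a ∈ s) :
    f a ≤ ∑ i ∈ s, f i := by
  classical
  induction s using Finset.induction_on with
  | empty => simp at ha
  | @insert b s' hb ihs =>
    rw [Finset.sum_insert hb]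
    rcases Finset.mem_insert.1 ha with rfl | h
    · exact le_sup_left
    · exact (ihs h).trans le_sup_right

lemma ideal_prod_mono {ι : Type*} (s : Finset ι) (f g : ι → Ideal R)
    (h : ∀ i ∈ s, f i ≤ g i) : ∏ i ∈ s, f i ≤ ∏ i ∈ s, g i := by
  classical
  induction s using Finset.induction_on with
  | empty => simp
  | @insert a s' ha ihs =>
    rw [Finset.prod_insert ha, Finset.prod_insert ha]
    exact Ideal.mul_mono (h a (Finset.mem_insert_self _ _))
      (ihs fun i hi' => h i (Finset.mem_insert_of_mem hi'))

lemma ideal_add_pow_le (A B : Ideal R) :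
    ∀ (c p q : ℕ), p + q = c + 1 → (A + B) ^ c ≤ A ^ p + B ^ q := by
  intro c
  induction c with
  | zero =>
    intro p q hpq
    rcases Nat.eq_zero_or_pos p with rfl | hp
    · have : q = 1 := by omega
      subst this; simp
    · have : p = 1 ∧ q = 0 := by omega
      obtain ⟨rfl, rfl⟩ := this; simp
  | succ c ih =>
    intro p q hpq
    rcases Nat.eq_zero_or_pos p with rfl | hp
    · simp
    rcases Nat.eq_zero_or_pos q with rfl | hq
    · simp
    obtain ⟨p, rfl⟩ : ∃ p', p = p' + 1 := ⟨p - 1, by omega⟩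
    obtain ⟨q, rfl⟩ : ∃ q', q = q' + 1 := ⟨q - 1, by omega⟩
    · 
      have h1 : (A + B) ^ c ≤ A ^ p + B ^ (q + 1) := ih p (q + 1) (by omega)
      have h2 : (A + B) ^ c ≤ A ^ (p + 1) + B ^ q := ih (p + 1) q (by omega)
      have hrw : (A + B) ^ (c + 1) = (A + B) ^ c * A + (A + B) ^ c * B := by
        rw [pow_succ, mul_add]
      rw [hrw]
      have hA : (A + B) ^ c * A ≤ A ^ (p + 1) + B ^ (q + 1) := by
        refine le_trans (Ideal.mul_mono h1 le_rfl) ?_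
        rw [add_mul]
        apply sup_le
        · exact le_trans (le_of_eq (pow_succ A p).symm) le_sup_left
        · exact Ideal.mul_le_left.trans le_sup_right
      have hB : (A + B) ^ c * B ≤ A ^ (p + 1) + B ^ (q + 1) := by
        refine le_trans (Ideal.mul_mono h2 le_rfl) ?_
        rw [add_mul]
        apply sup_le
        · exact Ideal.mul_le_left.trans le_sup_left
        · exact le_trans (le_of_eq (pow_succ B q).symm) le_sup_right
      exact sup_le hA hB

lemma ideal_prod_add_le {ι : Type*} (s : Finset ι) (E : Ideal R) (Q : ι → Ideal R) :
    ∏ i ∈ s, (E + Q i) ≤ E + ∏ i ∈ s, Q i := by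
  classical
  induction s using Finset.induction_on with
  | empty => simp
  | @insert a s' ha ihs =>
    rw [Finset.prod_insert ha, Finset.prod_insert ha]
    refine le_trans (Ideal.mul_mono le_rfl ihs) ?_
    rw [mul_add]
    apply sup_le
    · exact Ideal.mul_le_right.trans le_sup_left
    · rw [add_mul]
      apply sup_le
      · exact Ideal.mul_le_left.trans le_sup_left
      · exact le_sup_right

lemma pderiv_mem_pow {K : Type*} [Field K] {n : ℕ}
    {A : Ideal (MvPolynomial (Fin (n + 1)) K)} :
    ∀ (m : ℕ) (f : MvPolynomial (Fin (n + 1)) K), f ∈ A ^ (m + 1) →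
      ∀ t, pderiv t f ∈ A ^ m := by
  intro m
  induction m with
  | zero => intro f _ t; simp
  | succ m ih =>
    intro f hf t
    rw [pow_succ] at hf
    refine Submodule.mul_induction_on hf (fun a ha b hb => ?_) (fun x y hx hy => ?_)
    · rw [pderiv_mul]
      refine Ideal.add_mem _ ?_ ?_
      · rw [pow_succ]
        exact Ideal.mul_mem_mul (ih a ha t) hb
      · exact Ideal.mul_mem_right _ _ ha
    · simpa [map_add] using Ideal.add_mem _ hx hy

end Helpers


section Part2
variable {K : Type*} [Field K] {n : ℕ}

lemma degree_eq_of_mem_support {F : MvPolynomial (Fin (n + 1)) K} {d : ℕ}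
    (hF : F.IsHomogeneous d) {a : Fin (n + 1) →₀ ℕ} (ha : a ∈ F.support) :
    ∑ t, a t = d := by
  have h := hF (MvPolynomial.mem_support_iff.1 ha)
  rw [Finsupp.weight_apply] at h
  rw [← h, Finsupp.sum_fintype]
  · exact Finset.sum_congr rfl fun t _ => by simp
  · simp

lemma X_mul_pderiv_monomial (t : Fin (n + 1)) (a : Fin (n + 1) →₀ ℕ) (c : K) :
    X t * pderiv t (monomial a c) = monomial a (c * (a t : K)) := by
  rw [pderiv_monomial]
  rcases Nat.eq_zero_or_pos (a t) with h | h
  · simp [h]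
  · have hX : (X t : MvPolynomial (Fin (n + 1)) K) = monomial (Finsupp.single t 1) 1 := by
      rw [← pow_one (X t : MvPolynomial (Fin (n + 1)) K), X_pow_eq_monomial]
    have key : Finsupp.single t 1 + (a - Finsupp.single t 1) = a := by
      ext u
      rcases eq_or_ne u t with rfl | hu
      · simp only [Finsupp.add_apply, Finsupp.tsub_apply, Finsupp.single_eq_same]
        omega
      · simp [Finsupp.single_apply, Ne.symm hu, Finsupp.tsub_apply]
    rw [hX, monomial_mul, one_mul, key]

lemma euler_identity {d : ℕ} {F : MvPolynomial (Fin (n + 1)) K}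
    (hF : F.IsHomogeneous d) :
    ∑ t, X t * pderiv t F = C (d : K) * F := by
  conv_lhs => rw [F.as_sum]
  conv_rhs => rw [F.as_sum]
  rw [Finset.mul_sum]
  have : ∀ t, X t * pderiv t (∑ a ∈ F.support, monomial a (coeff a F))
      = ∑ a ∈ F.support, monomial a (coeff a F * (a t : K)) := by
    intro t
    rw [map_sum, Finset.mul_sum]
    exact Finset.sum_congr rfl fun a _ => X_mul_pderiv_monomial t a (coeff a F)
  rw [Finset.sum_congr rfl fun t _ => this t, Finset.sum_comm]
  refine Finset.sum_congr rfl fun a ha => ?_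
  rw [← map_sum (monomial a), ← Finset.mul_sum]
  rw [C_mul_monomial]
  congr 1
  · rw [← Nat.cast_sum, degree_eq_of_mem_support hF ha]
    ring

lemma sub_single_facts (a : Fin (n + 1) →₀ ℕ) (t : Fin (n + 1)) (ht : a t ≠ 0)
    (b : Fin (n + 1) →₀ ℕ) (hb : b = a - Finsupp.single t 1) :
    Finsupp.single t 1 + b = a ∧ (∑ u, b u) + 1 = ∑ u, a u := by
  have hbu : ∀ u, b u = a u - (if t = u then 1 else 0) := by
    intro u
    rw [hb]
    simp [Finsupp.tsub_apply, Finsupp.single_apply]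
  constructor
  · ext u
    have := hbu u
    rcases eq_or_ne t u with rfl | hu
    · simp only [Finsupp.add_apply, Finsupp.single_eq_same]
      simp only [eq_self_iff_true, if_true] at this
      omega
    · simp only [Finsupp.add_apply, Finsupp.single_apply, if_neg hu]
      simp only [if_neg hu] at this
      omega
  · have e1 : a t + ∑ u ∈ Finset.univ.erase t, a u = ∑ u, a u :=
      Finset.add_sum_erase _ (fun u => a u) (Finset.mem_univ t)
    have e2 : b t + ∑ u ∈ Finset.univ.erase t, b u = ∑ u, b u :=
      Finset.add_sum_erase _ (fun u => b u) (Finset.mem_univ t)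
    have e3 : ∑ u ∈ Finset.univ.erase t, b u = ∑ u ∈ Finset.univ.erase t, a u :=
      Finset.sum_congr rfl fun u hu => by
        rw [hbu u, if_neg (Finset.ne_of_mem_erase hu).symm]
        omega
    have e4 : b t = a t - 1 := by simpa using hbu t
    omega

lemma monomial_mem_irr_pow :
    ∀ (T : ℕ) (a : Fin (n + 1) →₀ ℕ) (c : K), T ≤ ∑ t, a t →
      monomial a c ∈ (Ideal.span (Set.range (X : Fin (n + 1) → MvPolynomial (Fin (n + 1)) K))) ^ T := by
  intro T
  induction T with
  | zero => intro a c _; simp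
  | succ T ih =>
    intro a c hT
    have : ∃ t, a t ≠ 0 := by
      by_contra h
      push_neg at h
      have : ∑ t, a t = 0 := Finset.sum_eq_zero fun t _ => h t
      omega
    obtain ⟨t, ht⟩ := this
    obtain ⟨key, hsum⟩ := sub_single_facts a t ht _ rfl
    have hX : (X t : MvPolynomial (Fin (n + 1)) K) = monomial (Finsupp.single t 1) 1 := by
      rw [← pow_one (X t : MvPolynomial (Fin (n + 1)) K), X_pow_eq_monomial]
    have hmono : monomial a c = X t * monomial (a - Finsupp.single t 1) c := by
      rw [hX, monomial_mul, one_mul, key]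
    rw [hmono, pow_succ']
    exact Ideal.mul_mem_mul (Ideal.subset_span ⟨t, rfl⟩) (ih _ c (by omega))

lemma homog_mem_irr_pow {F : MvPolynomial (Fin (n + 1)) K} {i T : ℕ}
    (hF : F.IsHomogeneous i) (hT : T ≤ i) :
    F ∈ (Ideal.span (Set.range (X : Fin (n + 1) → MvPolynomial (Fin (n + 1)) K))) ^ T := by
  rw [F.as_sum]
  exact Submodule.sum_mem _ fun a ha =>
    monomial_mem_irr_pow T a _ (le_trans hT (le_of_eq (degree_eq_of_mem_support hF ha).symm))

lemma comp_mul {u : MvPolynomial (Fin (n + 1)) K} {e : ℕ} (hu : u.IsHomogeneous e)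
    (g : MvPolynomial (Fin (n + 1)) K) (i : ℕ) :
    homogeneousComponent i (g * u) =
      if e ≤ i then homogeneousComponent (i - e) g * u else 0 := by
  classical
  conv_lhs => rw [← sum_homogeneousComponent g, Finset.sum_mul, map_sum]
  have hterm : ∀ d, homogeneousComponent i (homogeneousComponent d g * u)
      = if d = (i - e) ∧ e ≤ i then homogeneousComponent d g * u else 0 := by
    intro d
    have hmem : homogeneousComponent d g * u ∈ homogeneousSubmodule (Fin (n + 1)) K (d + e) :=
      (mem_homogeneousSubmodule _ _).2 ((homogeneousComponent_isHomogeneous d g).mul hu)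
    rw [homogeneousComponent_of_mem hmem]
    congr 1
    simp only [eq_iff_iff]
    omega
  rw [Finset.sum_congr rfl fun d _ => hterm d]
  by_cases hei : e ≤ i
  · simp only [hei, and_true, if_true]
    rw [Finset.sum_ite_eq' (Finset.range (g.totalDegree + 1)) (i - e)
      (fun d => homogeneousComponent d g * u)]
    by_cases hle : i - e ∈ Finset.range (g.totalDegree + 1)
    · rw [if_pos hle]
    · rw [if_neg hle]
      rw [homogeneousComponent_eq_zero _ g (by
        simpa using Nat.lt_of_succ_le (not_lt.1 (by simpa [Finset.mem_range] using hle))), zero_mul]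
  · simp [hei]

lemma homogeneousComponent_mem_span {S₀ : Set (MvPolynomial (Fin (n + 1)) K)}
    (hS : ∀ p ∈ S₀, ∃ d, p.IsHomogeneous d) {F : MvPolynomial (Fin (n + 1)) K}
    (hF : F ∈ Ideal.span S₀) (i : ℕ) :
    homogeneousComponent i F ∈ Ideal.span S₀ := by
  obtain ⟨c, hsupp, rfl⟩ := Submodule.mem_span_set.1 hF
  rw [Finsupp.sum, map_sum]
  refine Submodule.sum_mem _ fun p hp => ?_
  obtain ⟨d, hd⟩ := hS p (hsupp hp)
  rw [smul_eq_mul, comp_mul hd]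
  split
  · exact Ideal.mul_mem_left _ _ (Ideal.subset_span (hsupp hp))
  · exact Submodule.zero_mem _
end Part2


section Part3
variable {K : Type*} [Field K] {n : ℕ}

/-- The linear form `v t₀ • X t - v t • X t₀`, vanishing at `v`. -/
noncomputable def linForm (v : Fin (n + 1) → K) (t₀ t : Fin (n + 1)) :
    MvPolynomial (Fin (n + 1)) K :=
  C (v t₀) * X t - C (v t) * X t₀

lemma linForm_isHomogeneous (v : Fin (n + 1) → K) (t₀ t : Fin (n + 1)) :
    (linForm v t₀ t).IsHomogeneous 1 :=
  ((isHomogeneous_X K t).C_mul _).sub ((isHomogeneous_X K t₀).C_mul _)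

lemma eval_linForm (v w : Fin (n + 1) → K) (t₀ t : Fin (n + 1)) :
    eval w (linForm v t₀ t) = v t₀ * w t - v t * w t₀ := by
  simp [linForm]

lemma linForm_mem_pointIdeal (v : Fin (n + 1) → K) (t₀ t : Fin (n + 1)) :
    linForm v t₀ t ∈ pointIdeal v := by
  refine Ideal.subset_span ⟨⟨1, linForm_isHomogeneous v t₀ t⟩, ?_⟩
  rw [eval_linForm]
  ring

lemma pderiv_linForm (v : Fin (n + 1) → K) (t₀ t u : Fin (n + 1)) (hu : u ≠ t₀) :
    pderiv u (linForm v t₀ t) = if t = u then C (v t₀) else 0 := by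
  rcases eq_or_ne t u with rfl | ht
  · simp [linForm, pderiv_X_of_ne (Ne.symm hu)]
  · simp [linForm, pderiv_X_of_ne (Ne.symm ht), pderiv_X_of_ne (Ne.symm hu), ht]

lemma linForm_self (v : Fin (n + 1) → K) (t₀ : Fin (n + 1)) : linForm v t₀ t₀ = 0 := by
  simp [linForm]

/-- key: every homogeneous polynomial vanishing at `v` is in the span of the `linForm`s. -/
lemma pointIdeal_eq_span_linForm (v : Fin (n + 1) → K) (t₀ : Fin (n + 1)) (hv : v t₀ ≠ 0) :
    pointIdeal v = Ideal.span (Set.range (linForm v t₀)) := by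
  apply le_antisymm
  · rw [pointIdeal, Ideal.span_le]
    rintro F ⟨⟨d, hF⟩, hev⟩
    have key : C (v t₀) ^ d * F - C (eval v F) * X t₀ ^ d ∈
        Ideal.span (Set.range (linForm v t₀)) := by
      have repr : C (v t₀) ^ d * F - C (eval v F) * X t₀ ^ d
          = ∑ a ∈ F.support, (C (v t₀) ^ d * monomial a (coeff a F)
              - C (coeff a F) * C (∏ t, v t ^ a t) * X t₀ ^ d) := by
        rw [Finset.sum_sub_distrib, ← Finset.mul_sum, ← F.as_sum]
        congr 1
        rw [eval_eq', map_sum, Finset.sum_mul]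
        exact Finset.sum_congr rfl fun a _ => by rw [map_mul]
      rw [repr]
      refine Submodule.sum_mem _ fun a ha => ?_
      have hdeg : ∑ t, a t = d := degree_eq_of_mem_support hF ha
      -- rewrite both products
      have e1 : C (v t₀) ^ d * monomial a (coeff a F)
          = C (coeff a F) * ∏ t, (C (v t₀) * X t) ^ a t := by
        rw [monomial_eq, Finsupp.prod_fintype _ _ (fun i => pow_zero _)]
        simp only [mul_pow, Finset.prod_mul_distrib, Finset.prod_pow_eq_pow_sum, hdeg]
        ring
      have e2 : C (coeff a F) * C (∏ t, v t ^ a t) * X t₀ ^ d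
          = C (coeff a F) * ∏ t, (C (v t) * X t₀) ^ a t := by
        simp only [mul_pow, Finset.prod_mul_distrib, Finset.prod_pow_eq_pow_sum, hdeg, map_prod,
          map_pow]
        ring
      rw [e1, e2, ← mul_sub]
      refine Ideal.mul_mem_left _ _ ?_
      refine prod_sub_prod_mem _ _ _ fun t _ => ?_
      have hdvd : (C (v t₀) * X t - C (v t) * X t₀) ∣
          (C (v t₀) * X t) ^ a t - (C (v t) * X t₀) ^ a t :=
        sub_dvd_pow_sub_pow _ _ _
      have : (C (v t₀) * X t) ^ a t - (C (v t) * X t₀) ^ a t ∈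
          Ideal.span {linForm v t₀ t} := by
        rw [Ideal.mem_span_singleton]
        exact hdvd
      exact Ideal.span_mono (Set.singleton_subset_iff.2 (Set.mem_range_self t)) this
    rw [hev, map_zero, zero_mul, sub_zero] at key
    have hcancel : C ((v t₀)⁻¹) ^ d * (C (v t₀) ^ d * F) = F := by
      rw [← mul_assoc, ← mul_pow, ← map_mul, inv_mul_cancel₀ hv, map_one, one_pow, one_mul]
    rw [← hcancel]
    exact Ideal.mul_mem_left _ _ key
  · rw [Ideal.span_le]
    rintro g ⟨t, rfl⟩
    exact linForm_mem_pointIdeal v t₀ t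
end Part3

section Part4
variable {K : Type*} [Field K] {n : ℕ}

lemma pderiv_finset_prod_eq_zero {ι : Type*} (s : Finset ι)
    (f : ι → MvPolynomial (Fin (n + 1)) K) (u : Fin (n + 1))
    (h : ∀ i ∈ s, pderiv u (f i) = 0) : pderiv u (∏ i ∈ s, f i) = 0 := by
  classical
  induction s using Finset.induction_on with
  | empty => simp
  | @insert a s' ha ihs =>
    rw [Finset.prod_insert ha, pderiv_mul, h a (Finset.mem_insert_self _ _),
      ihs fun i hi => h i (Finset.mem_insert_of_mem hi)]
    ring

lemma prod_pow_mem {R : Type*} [CommRing R] {ι : Type*} {P : Ideal R} {x : ι → R}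
    (s : Finset ι) (b : ι → ℕ) (hx : ∀ i ∈ s, x i ∈ P) :
    ∏ i ∈ s, x i ^ b i ∈ P ^ (∑ i ∈ s, b i) := by
  rw [← Finset.prod_pow_eq_pow_sum]
  exact Ideal.prod_mem_prod fun i hi => Ideal.pow_mem_pow (hx i hi) _

lemma span_range_pow_le (g : Fin (n + 1) → MvPolynomial (Fin (n + 1)) K) :
    ∀ ν : ℕ, (Ideal.span (Set.range g)) ^ ν ≤
      Ideal.span {p | ∃ b : Fin (n + 1) → ℕ, (∑ t, b t = ν) ∧ p = ∏ t, g t ^ b t} := by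
  intro ν
  induction ν with
  | zero =>
    have h1 : (1 : MvPolynomial (Fin (n + 1)) K) ∈
        Ideal.span {p | ∃ b : Fin (n + 1) → ℕ, (∑ t, b t = 0) ∧ p = ∏ t, g t ^ b t} :=
      Ideal.subset_span ⟨fun _ => 0, by simp, by simp⟩
    rw [pow_zero, Ideal.one_eq_top]
    exact (Ideal.eq_top_iff_one _).2 h1 ▸ le_rfl
  | succ ν ih =>
    rw [pow_succ]
    refine le_trans (Ideal.mul_mono ih le_rfl) ?_
    rw [Ideal.span_mul_span']
    rw [Ideal.span_le]
    rintro x hx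
    rw [Set.mem_mul] at hx
    obtain ⟨p, ⟨b, hb, rfl⟩, q, ⟨t', rfl⟩, rfl⟩ := hx
    refine Ideal.subset_span ⟨Function.update b t' (b t' + 1), ?_, ?_⟩
    · rw [Finset.sum_update_of_mem (Finset.mem_univ t')]
      have := Finset.add_sum_erase Finset.univ b (Finset.mem_univ t')
      rw [← Finset.erase_eq]
      omega
    · have hrhs : ∏ t, g t ^ Function.update b t' (b t' + 1) t
          = g t' ^ (b t' + 1) * ∏ t ∈ Finset.univ.erase t', g t ^ b t := by
        rw [← Finset.mul_prod_erase Finset.univ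
          (fun t => g t ^ Function.update b t' (b t' + 1) t) (Finset.mem_univ t')]
        rw [Function.update_self]
        congr 1
        exact Finset.prod_congr rfl fun k hk => by
          rw [Function.update_of_ne (Finset.ne_of_mem_erase hk)]
      rw [hrhs, ← Finset.mul_prod_erase Finset.univ (fun t => g t ^ b t) (Finset.mem_univ t'),
        pow_succ]
      ring

lemma span_pow_le_span_prod {R : Type*} [CommRing R] (Z : Set R) :
    ∀ M : ℕ, (Ideal.span Z) ^ M ≤
      Ideal.span {p | ∃ f : Fin M → R, (∀ i, f i ∈ Z) ∧ p = ∏ i, f i} := by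
  intro M
  induction M with
  | zero =>
    have h1 : (1 : R) ∈ Ideal.span {p | ∃ f : Fin 0 → R, (∀ i, f i ∈ Z) ∧ p = ∏ i, f i} :=
      Ideal.subset_span ⟨Fin.elim0, fun i => i.elim0, by simp⟩
    rw [pow_zero, Ideal.one_eq_top]
    exact (Ideal.eq_top_iff_one _).2 h1 ▸ le_rfl
  | succ M ih =>
    rw [pow_succ]
    refine le_trans (Ideal.mul_mono ih le_rfl) ?_
    rw [Ideal.span_mul_span', Ideal.span_le]
    rintro x hx
    rw [Set.mem_mul] at hx
    obtain ⟨p, ⟨f, hf, rfl⟩, q, hq, rfl⟩ := hx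
    refine Ideal.subset_span ⟨Fin.snoc f q, ?_, ?_⟩
    · intro i
      induction i using Fin.lastCases with
      | last => rw [Fin.snoc_last]; exact hq
      | cast i => rw [Fin.snoc_castSucc]; exact hf i
    · rw [Fin.prod_univ_castSucc]
      simp [Fin.snoc_castSucc, Fin.snoc_last]

lemma prod_span_le {ι κ : Type*} [Nonempty κ] {R : Type*} [CommRing R] [DecidableEq ι]
    (A : Finset ι) (g : ι → κ → R) :
    ∏ k ∈ A, Ideal.span (Set.range (g k)) ≤
      Ideal.span {p | ∃ c : ι → κ, p = ∏ k ∈ A, g k (c k)} := by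
  classical
  induction A using Finset.induction_on with
  | empty =>
    have h1 : (1 : R) ∈ Ideal.span {p | ∃ c : ι → κ, p = ∏ k ∈ (∅ : Finset ι), g k (c k)} :=
      Ideal.subset_span ⟨fun _ => Classical.arbitrary κ, by simp⟩
    simpa using (Ideal.eq_top_iff_one _).2 h1 ▸ le_rfl
  | @insert a A' ha ih =>
    rw [Finset.prod_insert ha]
    refine le_trans (Ideal.mul_mono le_rfl ih) ?_
    rw [Ideal.span_mul_span', Ideal.span_le]
    rintro x hx
    rw [Set.mem_mul] at hx
    obtain ⟨p, ⟨t, rfl⟩, q, ⟨c, rfl⟩, rfl⟩ := hx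
    refine Ideal.subset_span ⟨Function.update c a t, ?_⟩
    rw [Finset.prod_insert ha, Function.update_self]
    congr 1
    exact Finset.prod_congr rfl fun k hk => by
      rw [Function.update_of_ne (fun h => ha (by rw [← h]; exact hk))]

lemma partialsIdeal_mono {K : Type*} [Field K] {n : ℕ}
    {A B : Ideal (MvPolynomial (Fin (n + 1)) K)} (h : A ≤ B) :
    partialsIdeal A ≤ partialsIdeal B :=
  Ideal.span_mono fun g ⟨F, hF, j, hg⟩ => ⟨F, h hF, j, hg⟩

lemma homog_span_le_partialsIdeal {K : Type*} [Field K] [CharZero K] {n : ℕ}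
    {A : Ideal (MvPolynomial (Fin (n + 1)) K)} {Z : Set (MvPolynomial (Fin (n + 1)) K)}
    (hle : A ≤ Ideal.span Z) (hZA : Z ⊆ (A : Set (MvPolynomial (Fin (n + 1)) K)))
    (hZ : ∀ p ∈ Z, ∃ d, d ≠ 0 ∧ p.IsHomogeneous d) : A ≤ partialsIdeal A := by
  refine le_trans hle (Ideal.span_le.2 fun p hp => ?_)
  obtain ⟨d, hd0, hdp⟩ := hZ p hp
  have heuler := euler_identity (K := K) hdp
  have hsum : ∑ t, X t * pderiv t p ∈ partialsIdeal A :=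
    Submodule.sum_mem _ fun t _ =>
      Ideal.mul_mem_left _ _ (Ideal.subset_span ⟨p, hZA hp, t, rfl⟩)
  rw [heuler] at hsum
  have hcd : (d : K) ≠ 0 := Nat.cast_ne_zero.2 hd0
  have : p = C ((d : K)⁻¹) * (C (d : K) * p) := by
    rw [← mul_assoc, ← map_mul, inv_mul_cancel₀ hcd, map_one, one_mul]
  rw [this]
  exact Ideal.mul_mem_left _ _ hsum

end Part4

section Part5
variable {K : Type*} [Field K] {n : ℕ}

lemma irr_le_pointIdeal_add (w w' : Fin (n + 1) → K) (hw : w ≠ 0)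
    (h : ∀ c : K, w' ≠ c • w) :
    Ideal.span (Set.range (X : Fin (n + 1) → MvPolynomial (Fin (n + 1)) K)) ≤
      pointIdeal w + pointIdeal w' := by
  have : ∃ u₀, w u₀ ≠ 0 := by
    by_contra hc; push_neg at hc; exact hw (funext hc)
  obtain ⟨u₀, hu₀⟩ := this
  have : ∃ t', w u₀ * w' t' - w t' * w' u₀ ≠ 0 := by
    by_contra hc; push_neg at hc
    refine h (w' u₀ / w u₀) (funext fun t => ?_)
    have ht := hc t
    have key : w' t = w' u₀ / w u₀ * w t := by
      field_simp
      linear_combination ht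
    simpa [Pi.smul_apply, smul_eq_mul] using key
  obtain ⟨t', hδ⟩ := this
  rw [Ideal.span_le]
  rintro x ⟨t, rfl⟩
  set δ := w u₀ * w' t' - w t' * w' u₀ with hδdef
  set ℓ : MvPolynomial (Fin (n + 1)) K := C (w' t / δ) * linForm w u₀ t' with hℓ
  have hℓ1 : ℓ ∈ pointIdeal w := Ideal.mul_mem_left _ _ (linForm_mem_pointIdeal w u₀ t')
  have hX : X t - ℓ ∈ pointIdeal w' := by
    refine Ideal.subset_span ⟨⟨1, ?_⟩, ?_⟩
    · exact (isHomogeneous_X K t).sub ((linForm_isHomogeneous w u₀ t').C_mul _)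
    · rw [map_sub, hℓ, map_mul, eval_linForm, eval_X, eval_C, ← hδdef]
      field_simp
      ring
  have hsplit : (X t : MvPolynomial (Fin (n + 1)) K) = ℓ + (X t - ℓ) := by ring
  rw [hsplit]
  exact Submodule.add_mem_sup hℓ1 hX

lemma irr_pow_le_sum {s : ℕ} (P : Fin s → Ideal (MvPolynomial (Fin (n + 1)) K)) (a : ℕ)
    (ha : 1 ≤ a)
    (hpair : ∀ j k, j ≠ k →
      Ideal.span (Set.range (X : Fin (n + 1) → MvPolynomial (Fin (n + 1)) K)) ≤ P j + P k)
    (A : Finset (Fin s)) (hA : A.Nonempty) :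
    ∃ e, (Ideal.span (Set.range (X : Fin (n + 1) → MvPolynomial (Fin (n + 1)) K))) ^ e ≤
      ∑ j ∈ A, ∏ k ∈ A.erase j, P k ^ a := by
  classical
  set m := Ideal.span (Set.range (X : Fin (n + 1) → MvPolynomial (Fin (n + 1)) K)) with hm
  induction hA using Finset.Nonempty.cons_induction with
  | singleton j => exact ⟨0, by simp⟩
  | cons j₀ B hj₀ hB ih =>
    obtain ⟨e₁, he₁⟩ := ih
    have hk : ∀ k ∈ B, m ^ (2 * a - 1) ≤ P j₀ ^ a + P k ^ a := by
      intro k hk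
      have hne : j₀ ≠ k := fun hh => hj₀ (hh ▸ hk)
      refine le_trans (Ideal.pow_right_mono (hpair j₀ k hne) _) ?_
      exact ideal_add_pow_le _ _ (2 * a - 1) a a (by omega)
    refine ⟨e₁ + (2 * a - 1) * B.card, ?_⟩
    have hsplit : m ^ (e₁ + (2 * a - 1) * B.card)
        = m ^ e₁ * ∏ _k ∈ B, m ^ (2 * a - 1) := by
      rw [Finset.prod_const, pow_add, ← pow_mul]
    rw [hsplit]
    refine le_trans (Ideal.mul_mono he₁ (ideal_prod_mono _ _ _ hk)) ?_
    refine le_trans (Ideal.mul_mono le_rfl (ideal_prod_add_le B (P j₀ ^ a) (fun k => P k ^ a))) ?_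
    rw [mul_add]
    apply sup_le
    · rw [Finset.sum_mul]
      refine ideal_sum_le _ _ fun j hj => ?_
      have hne : j ≠ j₀ := fun hh => hj₀ (hh ▸ hj)
      have heq : (Finset.cons j₀ B hj₀).erase j = insert j₀ (B.erase j) := by
        rw [Finset.cons_eq_insert, Finset.erase_insert_of_ne (Ne.symm hne)]
      have : (∏ k ∈ B.erase j, P k ^ a) * P j₀ ^ a = ∏ k ∈ (Finset.cons j₀ B hj₀).erase j, P k ^ a := by
        rw [heq, Finset.prod_insert (fun hh => hj₀ (Finset.mem_of_mem_erase hh))]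
        exact mul_comm _ _
      rw [this]
      exact ideal_le_sum (Finset.cons j₀ B hj₀)
        (fun j => ∏ k ∈ (Finset.cons j₀ B hj₀).erase j, P k ^ a) (Finset.mem_cons_of_mem hj)
    · refine le_trans Ideal.mul_le_right ?_
      have heq : ∏ k ∈ B, P k ^ a = ∏ k ∈ (Finset.cons j₀ B hj₀).erase j₀, P k ^ a := by
        rw [Finset.cons_eq_insert, Finset.erase_insert hj₀]
      rw [heq]
      exact ideal_le_sum (Finset.cons j₀ B hj₀)
        (fun j => ∏ k ∈ (Finset.cons j₀ B hj₀).erase j, P k ^ a) (Finset.mem_cons_self _ _)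

end Part5


/-- Let `X = P_1 + ⋯ + P_s` be a set of distinct points in `ℙ^n`
(char K = 0) and let `ν ≥ 1`. Then for all sufficiently large degrees `i`, the degree-`i`
components of `∂(I_X^{ν+1})`, of `∂I_{(ν+1)X}`, of `I_{νX}`, and of `I_X^ν` all coincide.
Here `I_{mX} = ⋂_j I_{P_j}^m`. -/
theorem partials_powers_points_eventually_eq {K : Type*} [Field K] [CharZero K]
    (n s : ℕ) (hs : 0 < s)
    (v : Fin s → (Fin (n + 1) → K))
    (hv0 : ∀ j, v j ≠ 0)
    (hdist : ∀ i j, i ≠ j → ∀ c : K, v i ≠ c • v j)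
    (ν : ℕ) (hν : 1 ≤ ν) :
    ∃ i₀ : ℕ, ∀ i ≥ i₀, ∀ F : MvPolynomial (Fin (n + 1)) K, F.IsHomogeneous i →
      ((F ∈ partialsIdeal ((⨅ j, pointIdeal (v j)) ^ (ν + 1)) ↔
          F ∈ partialsIdeal (⨅ j, (pointIdeal (v j)) ^ (ν + 1))) ∧
       (F ∈ partialsIdeal (⨅ j, (pointIdeal (v j)) ^ (ν + 1)) ↔
          F ∈ (⨅ j, (pointIdeal (v j)) ^ ν)) ∧
       (F ∈ (⨅ j, (pointIdeal (v j)) ^ ν) ↔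
          F ∈ (⨅ j, pointIdeal (v j)) ^ ν)) := by
  classical
  haveI : Nonempty (Fin s) := ⟨⟨0, hs⟩⟩
  -- basic choices
  have ht0 : ∀ j, ∃ t, v j t ≠ 0 := fun j => by
    by_contra h; push_neg at h; exact hv0 j (funext h)
  choose t0 ht0' using ht0
  set P : Fin s → Ideal (MvPolynomial (Fin (n + 1)) K) := fun j => pointIdeal (v j) with hPdef
  set mI : Ideal (MvPolynomial (Fin (n + 1)) K) :=
    Ideal.span (Set.range (X : Fin (n + 1) → MvPolynomial (Fin (n + 1)) K)) with hmI
  have hPspan : ∀ j, P j = Ideal.span (Set.range (linForm (v j) (t0 j))) := fun j =>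
    pointIdeal_eq_span_linForm (v j) (t0 j) (ht0' j)
  have hlinmem : ∀ j t, linForm (v j) (t0 j) t ∈ P j := fun j t =>
    linForm_mem_pointIdeal (v j) (t0 j) t
  have hpair : ∀ j k, j ≠ k → mI ≤ P j + P k := fun j k hjk =>
    irr_le_pointIdeal_add (v j) (v k) (hv0 j) (fun c => hdist k j (Ne.symm hjk) c)
  obtain ⟨e1, he1⟩ := irr_pow_le_sum P ν hν hpair Finset.univ Finset.univ_nonempty
  obtain ⟨e2, he2⟩ := irr_pow_le_sum P (ν + 2) (by omega) hpair Finset.univ Finset.univ_nonempty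
  set J' : Ideal (MvPolynomial (Fin (n + 1)) K) := ⨅ j, P j ^ ν with hJ'
  set PR : Ideal (MvPolynomial (Fin (n + 1)) K) := ∏ k, P k ^ ν with hPR
  set Dbig : Ideal (MvPolynomial (Fin (n + 1)) K) :=
    partialsIdeal ((∏ k, P k) ^ (ν + 1)) with hDbig
  -- KEY1 : mI ^ e1 * J' ≤ PR
  have KEY1 : mI ^ e1 * J' ≤ PR := by
    refine le_trans (Ideal.mul_mono he1 le_rfl) ?_
    rw [Finset.sum_mul]
    refine ideal_sum_le _ _ fun j _ => ?_
    refine le_trans (Ideal.mul_mono le_rfl (iInf_le (fun j => P j ^ ν) j)) ?_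
    rw [Finset.prod_erase_mul Finset.univ (fun k => P k ^ ν) (Finset.mem_univ j)]
  -- Euler consequence : (∏ k, P k) ^ (ν + 1) ≤ Dbig
  have RLE : (∏ k, P k) ^ (ν + 1) ≤ Dbig := by
    set Zin : Set (MvPolynomial (Fin (n + 1)) K) :=
      {p | ∃ c : Fin s → Fin (n + 1), p = ∏ k, linForm (v k) (t0 k) (c k)} with hZin
    set Zout : Set (MvPolynomial (Fin (n + 1)) K) :=
      {p | ∃ f : Fin (ν + 1) → MvPolynomial (Fin (n + 1)) K,
        (∀ i, f i ∈ Zin) ∧ p = ∏ i, f i} with hZout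
    have hZinP : Zin ⊆ ((∏ k, P k : Ideal _) : Set (MvPolynomial (Fin (n + 1)) K)) := by
      rintro p ⟨c, rfl⟩
      exact Ideal.prod_mem_prod fun k _ => hlinmem k (c k)
    have hprodle : (∏ k, P k : Ideal _) ≤ Ideal.span Zin := by
      have e : (∏ k, P k : Ideal _) = ∏ k, Ideal.span (Set.range (linForm (v k) (t0 k))) :=
        Finset.prod_congr rfl fun k _ => hPspan k
      rw [e]
      exact prod_span_le Finset.univ (fun k => linForm (v k) (t0 k))
    refine homog_span_le_partialsIdeal (le_trans (Ideal.pow_right_mono hprodle _)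
      (span_pow_le_span_prod Zin (ν + 1))) ?_ ?_
    · rintro p ⟨f, hf, rfl⟩
      have hconst : ((∏ k, P k : Ideal _) ^ (ν + 1) : Ideal _)
          = ∏ _i : Fin (ν + 1), (∏ k, P k : Ideal _) := by
        rw [Finset.prod_const, Finset.card_univ, Fintype.card_fin]
      rw [SetLike.mem_coe, hconst]
      exact Ideal.prod_mem_prod fun i _ => hZinP (hf i)
    · rintro p ⟨f, hf, rfl⟩
      refine ⟨(ν + 1) * s, by positivity, ?_⟩
      have : ∀ i : Fin (ν + 1), (f i).IsHomogeneous s := by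
        intro i
        obtain ⟨c, hc⟩ := hf i
        rw [hc]
        have := MvPolynomial.IsHomogeneous.prod Finset.univ
          (fun k => linForm (v k) (t0 k) (c k)) (fun _ => 1)
          (fun k _ => linForm_isHomogeneous (v k) (t0 k) (c k))
        simpa using this
      have := MvPolynomial.IsHomogeneous.prod Finset.univ f (fun _ => s) (fun i _ => this i)
      simpa [Finset.sum_const, Finset.card_univ, mul_comm] using this
  -- LOCAL claim
  have local_claim : ∀ (j : Fin s) (q : MvPolynomial (Fin (n + 1)) K),
      q ∈ (∏ k ∈ Finset.univ.erase j, P k) ^ (ν + 2) →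
      ∀ b : Fin (n + 1) → ℕ, (∑ t, b t = ν) →
      q * ∏ t, linForm (v j) (t0 j) t ^ b t ∈ Dbig := by
    intro j q hq b hb
    set L : Fin (n + 1) → MvPolynomial (Fin (n + 1)) K := fun t => linForm (v j) (t0 j) t with hL
    by_cases hb0 : b (t0 j) = 0
    · -- main case
      have hex : ∃ u, b u ≠ 0 ∧ u ≠ t0 j := by
        by_contra hcon
        push_neg at hcon
        have : ∀ u, b u = 0 := fun u => by
          by_cases hu : u = t0 j
          · rw [hu]; exact hb0
          · by_contra hbu; exact hu (hcon u hbu)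
        have : ∑ t, b t = 0 := Finset.sum_eq_zero fun t _ => this t
        omega
      obtain ⟨u, hbu, hut⟩ := hex
      set Pi : MvPolynomial (Fin (n + 1)) K := ∏ t, L t ^ b t with hPi
      have hPimem : Pi ∈ P j ^ ν := by
        rw [hPi, ← hb]
        exact prod_pow_mem Finset.univ b (fun t _ => hlinmem j t)
      have hLPmem : L u * Pi ∈ P j ^ (ν + 1) := by
        rw [pow_succ']
        exact Ideal.mul_mem_mul (hlinmem j u) hPimem
      have hqmem : q ∈ (∏ k ∈ Finset.univ.erase j, P k) ^ (ν + 1) :=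
        Ideal.pow_le_pow_right (by omega) hq
      have hmulmem : ∀ x, x ∈ (∏ k ∈ Finset.univ.erase j, P k) ^ (ν + 1) →
          ∀ y, y ∈ P j ^ (ν + 1) → x * y ∈ (∏ k, P k) ^ (ν + 1) := by
        intro x hx y hy
        have e : ((∏ k, P k : Ideal _) ^ (ν + 1) : Ideal _)
            = (∏ k ∈ Finset.univ.erase j, P k) ^ (ν + 1) * P j ^ (ν + 1) := by
          rw [← mul_pow, Finset.prod_erase_mul Finset.univ P (Finset.mem_univ j)]
        rw [e]
        exact Ideal.mul_mem_mul hx hy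
      have hG : q * (L u * Pi) ∈ (∏ k, P k) ^ (ν + 1) := hmulmem q hqmem _ hLPmem
      have hDG : pderiv u (q * (L u * Pi)) ∈ Dbig :=
        Ideal.subset_span ⟨_, hG, u, rfl⟩
      -- compute the derivative of L u * Pi
      have hRest : pderiv u (∏ t ∈ Finset.univ.erase u, L t ^ b t) = 0 := by
        refine pderiv_finset_prod_eq_zero _ _ _ fun t ht => ?_
        rw [pderiv_pow, hL]
        rw [pderiv_linForm (v j) (t0 j) t u hut, if_neg (Finset.ne_of_mem_erase ht)]
        ring
      have hsplit : L u * Pi = L u ^ (b u + 1) * ∏ t ∈ Finset.univ.erase u, L t ^ b t := by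
        rw [hPi, ← Finset.mul_prod_erase Finset.univ (fun t => L t ^ b t) (Finset.mem_univ u),
          pow_succ]
        ring
      have hD2 : pderiv u (L u * Pi)
          = ((b u + 1 : ℕ) : MvPolynomial (Fin (n + 1)) K) * C (v j (t0 j)) * Pi := by
        rw [hsplit, pderiv_mul, hRest, mul_zero, add_zero, pderiv_pow, hL,
          pderiv_linForm (v j) (t0 j) u u hut, if_pos rfl]
        rw [hPi, ← Finset.mul_prod_erase Finset.univ (fun t => L t ^ b t) (Finset.mem_univ u)]
        simp only [Nat.add_sub_cancel]
        push_cast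
        ring
      have hterm1 : pderiv u q * (L u * Pi) ∈ Dbig := by
        refine RLE (hmulmem _ (pderiv_mem_pow (ν + 1) q hq u) _ hLPmem)
      have hfinal : q * (((b u + 1 : ℕ) : MvPolynomial (Fin (n + 1)) K) * C (v j (t0 j)) * Pi)
          ∈ Dbig := by
        have : q * (((b u + 1 : ℕ) : MvPolynomial (Fin (n + 1)) K) * C (v j (t0 j)) * Pi)
            = pderiv u (q * (L u * Pi)) - pderiv u q * (L u * Pi) := by
          rw [pderiv_mul, hD2]
          ring
        rw [this]
        exact Ideal.sub_mem _ hDG hterm1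
      -- extract q * Pi
      have hscalar : ((b u + 1 : K) * v j (t0 j)) ≠ 0 :=
        mul_ne_zero (by exact_mod_cast Nat.succ_ne_zero (b u)) (ht0' j)
      have hqPi : q * Pi = C (((b u + 1 : K) * v j (t0 j))⁻¹) *
          (q * (((b u + 1 : ℕ) : MvPolynomial (Fin (n + 1)) K) * C (v j (t0 j)) * Pi)) := by
        have h1 : C (((b u + 1 : K) * v j (t0 j))⁻¹) *
            (((b u + 1 : ℕ) : MvPolynomial (Fin (n + 1)) K) * C (v j (t0 j))) = 1 := by
          rw [← map_natCast (C : K →+* MvPolynomial (Fin (n + 1)) K) (b u + 1), ← map_mul,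
            ← map_mul]
          have h2 : ((b u + 1 : ℕ) : K) = (b u + 1 : K) := by push_cast; ring
          rw [h2, inv_mul_cancel₀ hscalar, map_one]
        calc q * Pi = (C (((b u + 1 : K) * v j (t0 j))⁻¹) *
              (((b u + 1 : ℕ) : MvPolynomial (Fin (n + 1)) K) * C (v j (t0 j)))) * (q * Pi) := by
              rw [h1, one_mul]
          _ = C (((b u + 1 : K) * v j (t0 j))⁻¹) *
              (q * (((b u + 1 : ℕ) : MvPolynomial (Fin (n + 1)) K) * C (v j (t0 j)) * Pi)) := by
              ring
      rw [hqPi]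
      exact Ideal.mul_mem_left _ _ hfinal
    · -- degenerate case : the factor at t0 j is zero
      have hzero : (∏ t, L t ^ b t) = 0 := by
        refine Finset.prod_eq_zero (Finset.mem_univ (t0 j)) ?_
        show linForm (v j) (t0 j) (t0 j) ^ b (t0 j) = 0
        rw [linForm_self]
        exact zero_pow hb0
      rw [hzero, mul_zero]
      exact Ideal.zero_mem _
  -- QPLE
  have QPLE : ∀ j : Fin s, (∏ k ∈ Finset.univ.erase j, P k) ^ (ν + 2) * P j ^ ν ≤ Dbig := by
    intro j
    rw [Ideal.mul_le]
    intro q hq p hp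
    have hp' : p ∈ Ideal.span {p | ∃ b : Fin (n + 1) → ℕ,
        (∑ t, b t = ν) ∧ p = ∏ t, linForm (v j) (t0 j) t ^ b t} := by
      rw [hPspan j] at hp
      exact span_range_pow_le (linForm (v j) (t0 j)) ν hp
    clear hp
    induction hp' using Submodule.span_induction with
    | mem x hx =>
      obtain ⟨b, hb, rfl⟩ := hx
      exact local_claim j q hq b hb
    | zero => simpa using Ideal.zero_mem _
    | add x y hx hy hx' hy' => rw [mul_add]; exact Ideal.add_mem _ hx' hy'
    | smul r x hx hx' =>
      rw [smul_eq_mul, ← mul_assoc, mul_comm q r, mul_assoc]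
      exact Ideal.mul_mem_left _ _ hx'
  -- KEY2 : mI ^ e2 * PR ≤ Dbig
  have KEY2 : mI ^ e2 * PR ≤ Dbig := by
    refine le_trans (Ideal.mul_mono he2 le_rfl) ?_
    rw [Finset.sum_mul]
    refine ideal_sum_le _ _ fun j _ => ?_
    have ePR : PR = (∏ k ∈ Finset.univ.erase j, P k ^ ν) * P j ^ ν := by
      rw [hPR, Finset.prod_erase_mul Finset.univ (fun k => P k ^ ν) (Finset.mem_univ j)]
    have eQ : ∏ k ∈ Finset.univ.erase j, P k ^ (ν + 2)
        = (∏ k ∈ Finset.univ.erase j, P k) ^ (ν + 2) := Finset.prod_pow _ _ _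
    rw [ePR, eQ]
    have : (∏ k ∈ Finset.univ.erase j, P k) ^ (ν + 2) *
          ((∏ k ∈ Finset.univ.erase j, P k ^ ν) * P j ^ ν)
        = (∏ k ∈ Finset.univ.erase j, P k ^ ν) *
          ((∏ k ∈ Finset.univ.erase j, P k) ^ (ν + 2) * P j ^ ν) := by ring
    rw [this]
    exact le_trans Ideal.mul_le_right (QPLE j)
  -- homogeneous generation of powers of point ideals
  have hPowSpanEq : ∀ j, P j ^ ν = Ideal.span {p | ∃ b : Fin (n + 1) → ℕ,
      (∑ t, b t = ν) ∧ p = ∏ t, linForm (v j) (t0 j) t ^ b t} := by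
    intro j
    apply le_antisymm
    · rw [hPspan j]
      exact span_range_pow_le _ ν
    · rw [Ideal.span_le]
      rintro p ⟨b, hb, rfl⟩
      rw [SetLike.mem_coe, ← hb]
      exact prod_pow_mem Finset.univ b (fun t _ => hlinmem j t)
  have hgenhomog : ∀ j, ∀ p ∈ {p | ∃ b : Fin (n + 1) → ℕ,
      (∑ t, b t = ν) ∧ p = ∏ t, linForm (v j) (t0 j) t ^ b t}, ∃ d, p.IsHomogeneous d := by
    rintro j p ⟨b, hb, rfl⟩
    refine ⟨ν, ?_⟩
    have := MvPolynomial.IsHomogeneous.prod Finset.univ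
      (fun t => linForm (v j) (t0 j) t ^ b t) (fun t => b t)
      (fun t _ => by simpa using (linForm_isHomogeneous (v j) (t0 j) t).pow (b t))
    rwa [hb] at this
  have hJ'comp : ∀ F ∈ J', ∀ i, homogeneousComponent i F ∈ J' := by
    intro F hF i
    rw [hJ', Submodule.mem_iInf] at hF ⊢
    intro j
    have hFj := hF j
    rw [hPowSpanEq j] at hFj ⊢
    exact homogeneousComponent_mem_span (hgenhomog j) hFj i
  -- finite homogeneous generating set for J'
  set S₀ : Set (MvPolynomial (Fin (n + 1)) K) :=
    {p | p ∈ J' ∧ ∃ d, p.IsHomogeneous d} with hS₀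
  have hJ'span : J' = Ideal.span S₀ := by
    apply le_antisymm
    · intro F hF
      have : F = ∑ i ∈ Finset.range (F.totalDegree + 1), homogeneousComponent i F :=
        (sum_homogeneousComponent F).symm
      rw [this]
      exact Submodule.sum_mem _ fun i _ => Ideal.subset_span
        ⟨hJ'comp F hF i, ⟨i, homogeneousComponent_isHomogeneous i F⟩⟩
    · rw [Ideal.span_le]
      exact fun p hp => hp.1
  have hfg : J'.FG := IsNoetherian.noetherian J'
  obtain ⟨G, hG⟩ := hfg
  have hGmem : ∀ x ∈ G, ∃ T : Finset (MvPolynomial (Fin (n + 1)) K),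
      ↑T ⊆ S₀ ∧ x ∈ Ideal.span (↑T : Set _) := by
    intro x hx
    have hxJ : x ∈ J' := hG ▸ Ideal.subset_span hx
    rw [hJ'span] at hxJ
    exact Submodule.mem_span_finite_of_mem_span hxJ
  choose T hT1 hT2 using hGmem
  set U : Finset (MvPolynomial (Fin (n + 1)) K) :=
    G.attach.biUnion (fun x => T x.1 x.2) with hU
  have hUS₀ : ↑U ⊆ S₀ := by
    intro x hx
    rw [hU] at hx
    simp only [Finset.coe_biUnion, Set.mem_iUnion] at hx
    obtain ⟨y, _, hy2⟩ := hx
    exact hT1 y.1 y.2 hy2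
  have hUspan : Ideal.span (↑U : Set _) = J' := by
    apply le_antisymm
    · rw [Ideal.span_le]
      intro x hx
      have := hUS₀ hx
      exact this.1
    · rw [← hG, Ideal.span_le]
      intro x hx
      refine Ideal.span_mono ?_ (hT2 x hx)
      intro y hy
      rw [hU]
      simp only [Finset.coe_biUnion, Set.mem_iUnion]
      exact ⟨⟨x, hx⟩, Finset.mem_attach _ _, hy⟩
  have hUdeg : ∀ u ∈ U, ∃ d, (u : MvPolynomial (Fin (n + 1)) K).IsHomogeneous d :=
    fun u hu => (hUS₀ hu).2
  set δ : ℕ := U.attach.sup (fun u => Classical.choose (hUdeg u.1 u.2)) with hδ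
  -- THE eventual bound
  refine ⟨δ + e1 + e2, fun i hi F hFi => ?_⟩
  -- membership amplification
  have MEM : F ∈ J' → F ∈ mI ^ (e1 + e2) * J' := by
    intro hFJ
    rw [← hUspan] at hFJ
    obtain ⟨f, -, hf⟩ := Submodule.mem_span_finset.1 hFJ
    have hFcomp : F = homogeneousComponent i F := by
      rw [homogeneousComponent_of_mem ((mem_homogeneousSubmodule _ _).2 hFi), if_pos rfl]
    rw [hFcomp, ← hf, map_sum]
    refine Submodule.sum_mem _ fun u hu => ?_
    have hdu := Classical.choose_spec (hUdeg u hu)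
    set du := Classical.choose (hUdeg u hu) with hdu'
    have hdle : du ≤ δ := by
      rw [hδ]
      exact Finset.le_sup (f := fun u => Classical.choose (hUdeg u.1 u.2))
        (Finset.mem_attach U ⟨u, hu⟩)
    rw [smul_eq_mul, comp_mul hdu (f u) i, if_pos (by omega)]
    refine Ideal.mul_mem_mul ?_ ?_
    · exact homog_mem_irr_pow (homogeneousComponent_isHomogeneous _ _) (by omega)
    · rw [← hUspan]
      exact Ideal.subset_span hu
  -- inclusion chain
  have hINC1 : Dbig ≤ partialsIdeal ((⨅ j, P j) ^ (ν + 1)) := by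
    refine partialsIdeal_mono (Ideal.pow_right_mono (le_iInf fun j => ?_) _)
    exact le_trans Ideal.prod_le_inf (Finset.inf_le (Finset.mem_univ j))
  have hINC2 : partialsIdeal ((⨅ j, P j) ^ (ν + 1)) ≤ partialsIdeal (⨅ j, P j ^ (ν + 1)) :=
    partialsIdeal_mono (le_iInf fun j => Ideal.pow_right_mono (iInf_le _ j) _)
  have hINC3 : partialsIdeal (⨅ j, P j ^ (ν + 1)) ≤ J' := by
    rw [partialsIdeal, Ideal.span_le]
    rintro g ⟨F', hF', t, rfl⟩
    rw [SetLike.mem_coe, hJ', Submodule.mem_iInf]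
    intro j
    exact pderiv_mem_pow ν F' (Submodule.mem_iInf _ |>.1 hF' j) t
  have hINC5 : (⨅ j, P j) ^ ν ≤ J' :=
    le_iInf fun j => Ideal.pow_right_mono (iInf_le _ j) _
  have hPRle : PR ≤ (⨅ j, P j) ^ ν := by
    rw [hPR, Finset.prod_pow]
    exact Ideal.pow_right_mono (le_iInf fun j =>
      le_trans Ideal.prod_le_inf (Finset.inf_le (Finset.mem_univ j))) _
  -- the amplified membership lands in Dbig
  have hJD : F ∈ J' → F ∈ Dbig := by
    intro hFJ
    have h1 : F ∈ mI ^ (e1 + e2) * J' := MEM hFJ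
    have h2 : mI ^ (e1 + e2) * J' = mI ^ e2 * (mI ^ e1 * J') := by
      rw [pow_add]; ring
    rw [h2] at h1
    exact KEY2 (Ideal.mul_mono le_rfl KEY1 h1)
  have hJPow : F ∈ J' → F ∈ (⨅ j, P j) ^ ν := by
    intro hFJ
    have h1 : F ∈ mI ^ (e1 + e2) * J' := MEM hFJ
    have h2 : mI ^ (e1 + e2) * J' = mI ^ e2 * (mI ^ e1 * J') := by
      rw [pow_add]; ring
    rw [h2] at h1
    exact hPRle (Ideal.mul_le_right (Ideal.mul_mono le_rfl KEY1 h1))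
  refine ⟨⟨fun h => hINC2 h, fun h => hINC1 (hJD (hINC3 h))⟩,
    ⟨fun h => hINC3 h, fun h => hINC2 (hINC1 (hJD h))⟩,
    ⟨fun h => hJPow h, fun h => hINC5 h⟩⟩
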